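/- If S ⊆ {0,1}^n is cube-ideal, then every restriction of S obtained by fixing some coordinates to 0 or 1 and dropping those coordinates is also cube-ideal. -/

import Mathlib

/-- The 0/1 point of `ℝ^ι` corresponding to `x ∈ {0,1}^ι`. -/
def emb {ι : Type*} (x : ι → Bool) : ι → ℝ := fun i => if x i then 1 else 0

/-- `S ⊆ {0,1}^ι` is cube-ideal if its convex hull can be described by
`0 ≤ x ≤ 1` together with inequalities `∑_{i∈I} x_i + ∑_{j∈J} (1-x_j) ≥ 1`
for disjoint `I, J`. -/
def CubeIdeal {ι : Type*} [Fintype ι] (S : Set (ι → Bool)) : Prop :=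
  ∃ P : Set (Finset ι × Finset ι),
    (∀ q ∈ P, Disjoint q.1 q.2) ∧
    convexHull ℝ (emb '' S) =
      { x : ι → ℝ | (∀ i, 0 ≤ x i ∧ x i ≤ 1) ∧
        ∀ q ∈ P, 1 ≤ ∑ i ∈ q.1, x i + ∑ j ∈ q.2, (1 - x j) }

lemma emb_mem_Icc {ι : Type*} (x : ι → Bool) (i : ι) : 0 ≤ emb x i ∧ emb x i ≤ 1 := by
  unfold emb; split <;> norm_num

lemma emb_zero_or_one {ι : Type*} (x : ι → Bool) (i : ι) : emb x i = 0 ∨ emb x i = 1 := by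
  unfold emb; split <;> simp

/-- In a convex combination equal to `1` with all values `≤ 1`, every value with
nonzero weight equals `1`. -/
lemma support_eq_one {ι : Type*} (t : Finset ι) (w v : ι → ℝ)
    (hw0 : ∀ i ∈ t, 0 ≤ w i) (hw1 : ∑ i ∈ t, w i = 1)
    (hv1 : ∀ i ∈ t, v i ≤ 1) (hsum : ∑ i ∈ t, w i * v i = 1) :
    ∀ i ∈ t, w i ≠ 0 → v i = 1 := by
  have hle : ∀ i ∈ t, w i * v i ≤ w i := fun i hi =>
    mul_le_of_le_one_right (hw0 i hi) (hv1 i hi)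
  have hall := (Finset.sum_eq_sum_iff_of_le hle).1 (by rw [hsum, hw1])
  intro i hi hwi
  have h := hall i hi
  have : w i * v i = w i * 1 := by rw [mul_one]; exact h
  exact mul_left_cancel₀ hwi this

/-- In a nonnegative combination equal to `0`, every value with nonzero weight is `0`. -/
lemma support_eq_zero {ι : Type*} (t : Finset ι) (w v : ι → ℝ)
    (hw0 : ∀ i ∈ t, 0 ≤ w i) (hv0 : ∀ i ∈ t, 0 ≤ v i)
    (hsum : ∑ i ∈ t, w i * v i = 0) :
    ∀ i ∈ t, w i ≠ 0 → v i = 0 := by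
  have hall := (Finset.sum_eq_zero_iff_of_nonneg
    (fun i hi => mul_nonneg (hw0 i hi) (hv0 i hi))).1 hsum
  intro i hi hwi
  rcases mul_eq_zero.1 (hall i hi) with h | h
  · exact absurd h hwi
  · exact h

/-- Face lemma: a point of the convex hull of `emb '' S` all of whose coordinates
outside `K` are the 0/1 values of `a` lies in the convex hull of the points of
`S` agreeing with `a` outside `K`. -/
lemma face_lemma {n : ℕ} (S : Set (Fin n → Bool)) (K : Finset (Fin n)) (a : Fin n → Bool)
    {x : Fin n → ℝ} (hx : x ∈ convexHull ℝ (emb '' S))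
    (hxa : ∀ i ∉ K, x i = emb a i) :
    x ∈ convexHull ℝ (emb '' {s | s ∈ S ∧ ∀ i ∉ K, s i = a i}) := by
  classical
  rw [convexHull_eq] at hx
  obtain ⟨ι', t, w, z, hw0, hw1, hz, hxc⟩ := hx
  have hxcoord : ∀ j, x j = ∑ i ∈ t, w i * z i j := by
    intro j
    rw [← hxc, Finset.centerMass_eq_of_sum_1 _ _ hw1]
    simp [Finset.sum_apply]
  have hz01 : ∀ i ∈ t, ∀ j, z i j = 0 ∨ z i j = 1 := by
    intro i hi j
    obtain ⟨s, _, hzs⟩ := hz i hi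
    rw [← hzs]; exact emb_zero_or_one s j
  have key : ∀ i ∈ t, w i ≠ 0 → z i ∈ emb '' {s | s ∈ S ∧ ∀ j ∉ K, s j = a j} := by
    intro i hi hwi
    obtain ⟨s, hs, hzs⟩ := hz i hi
    refine ⟨s, ⟨hs, ?_⟩, hzs⟩
    intro j hj
    have hxj := hxa j hj
    by_cases ha : a j
    · have h1 : ∑ i ∈ t, w i * z i j = 1 := by
        rw [← hxcoord, hxj]; simp [emb, ha]
      have hz1 : z i j = 1 := support_eq_one t w (fun i => z i j) hw0 hw1
        (fun i hi => by rcases hz01 i hi j with h | h <;> simp [h]) h1 i hi hwi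
      have hz1' : emb s j = 1 := by rw [hzs]; exact hz1
      by_cases hs' : s j
      · rw [hs', ha]
      · exfalso; simp [emb, hs'] at hz1'
    · have h0 : ∑ i ∈ t, w i * z i j = 0 := by
        rw [← hxcoord, hxj]; simp [emb, ha]
      have hz0 : z i j = 0 := support_eq_zero t w (fun i => z i j) hw0
        (fun i hi => by rcases hz01 i hi j with h | h <;> simp [h]) h0 i hi hwi
      have hz0' : emb s j = 0 := by rw [hzs]; exact hz0
      by_cases hs' : s j
      · exfalso; simp [emb, hs'] at hz0'
      · simp only [Bool.not_eq_true] at hs' ha; rw [hs', ha]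
  rw [← hxc, ← Finset.centerMass_filter_ne_zero (w := w) (z := z)]
  apply Finset.centerMass_mem_convexHull
  · intro i hi; exact hw0 i (Finset.mem_filter.1 hi).1
  · have : ∑ i ∈ t with w i ≠ 0, w i = 1 := by
      rw [Finset.sum_filter_ne_zero, hw1]
    rw [this]; norm_num
  · intro i hi
    obtain ⟨hit, hwi⟩ := Finset.mem_filter.1 hi
    exact key i hit hwi

/-- The set of points agreeing with given values outside `K` is convex. -/
lemma convex_fix {n : ℕ} (K : Finset (Fin n)) (c : Fin n → ℝ) :
    Convex ℝ {x : Fin n → ℝ | ∀ i ∉ K, x i = c i} := by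
  intro u hu v hv α β hα hβ hαβ i hi
  have := hu i hi
  have := hv i hi
  simp only [Pi.add_apply, Pi.smul_apply, smul_eq_mul]
  rw [hu i hi, hv i hi]
  linear_combination c i * hαβ

/-- Restrictions of a cube-ideal set (fix the coordinates outside `K` to the
values of `a` and drop them) are cube-ideal. -/
theorem stmt_3 {n : ℕ} (S : Set (Fin n → Bool)) (hS : CubeIdeal S)
    (K : Finset (Fin n)) (a : Fin n → Bool) :
    CubeIdeal { y : {i // i ∈ K} → Bool |
      ∃ x ∈ S, (∀ i : {i // i ∈ K}, x i = y i) ∧ ∀ i ∉ K, x i = a i } := by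
  classical
  obtain ⟨P, hPdisj, hPdesc⟩ := hS
  set κ := {i // i ∈ K}
  set T : Set (κ → Bool) :=
    { y | ∃ x ∈ S, (∀ i : κ, x i = y i) ∧ ∀ i ∉ K, x i = a i } with hT
  set Sa : Set (Fin n → Bool) := {s | s ∈ S ∧ ∀ i ∉ K, s i = a i} with hSa
  set π : (Fin n → ℝ) →ₗ[ℝ] (κ → ℝ) := LinearMap.funLeft ℝ ℝ (Subtype.val) with hπ
  -- Step A : emb '' T = π '' (emb '' Sa)
  have stepA : emb '' T = π '' (emb '' Sa) := by
    ext y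
    constructor
    · rintro ⟨y₀, ⟨x, hxS, hxy, hxa⟩, rfl⟩
      refine ⟨emb x, ⟨x, ⟨hxS, hxa⟩, rfl⟩, ?_⟩
      funext i
      simp only [hπ, LinearMap.funLeft_apply, emb, hxy i]
    · rintro ⟨-, ⟨s, ⟨hsS, hsa⟩, rfl⟩, rfl⟩
      refine ⟨fun i : κ => s i, ⟨s, hsS, fun i => rfl, hsa⟩, ?_⟩
      funext i
      simp only [hπ, LinearMap.funLeft_apply, emb]
  -- the restricted inequality system
  set P' : Set (Finset κ × Finset κ) :=
    { r | ∃ q ∈ P, (∀ i ∈ q.1, i ∉ K → a i = false) ∧ (∀ j ∈ q.2, j ∉ K → a j = true) ∧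
        r.1 = q.1.subtype (· ∈ K) ∧ r.2 = q.2.subtype (· ∈ K) } with hP'
  refine ⟨P', ?_, ?_⟩
  · rintro r ⟨q, hq, -, -, h1, h2⟩
    rw [h1, h2, Finset.disjoint_left]
    intro i hi1 hi2
    rw [Finset.mem_subtype] at hi1 hi2
    exact (Finset.disjoint_left.1 (hPdisj q hq)) hi1 hi2
  · apply Set.Subset.antisymm
    · -- convexHull (emb '' T) ⊆ described set
      rw [stepA, ← π.image_convexHull]
      rintro - ⟨x, hx, rfl⟩
      have hxS : x ∈ convexHull ℝ (emb '' S) :=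
        convexHull_mono (Set.image_mono (fun s hs => hs.1)) hx
      have hxfix : ∀ i ∉ K, x i = emb a i := by
        have : convexHull ℝ (emb '' Sa) ⊆ {x : Fin n → ℝ | ∀ i ∉ K, x i = emb a i} := by
          apply convexHull_min _ (convex_fix K (emb a))
          rintro - ⟨s, ⟨-, hsa⟩, rfl⟩ i hi
          simp [emb, hsa i hi]
        exact this hx
      rw [hPdesc] at hxS
      obtain ⟨hbox, hineq⟩ := hxS
      constructor
      · intro i
        exact hbox i
      · rintro r ⟨q, hq, hq1, hq2, hr1, hr2⟩
        have h1 : ∑ i ∈ r.1, π x i = ∑ i ∈ q.1 with i ∈ K, x i := by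
          rw [hr1]
          simp only [hπ, LinearMap.funLeft_apply]
          exact Finset.sum_subtype_eq_sum_filter x
        have h2 : ∑ j ∈ r.2, (1 - π x j) = ∑ j ∈ q.2 with j ∈ K, (1 - x j) := by
          rw [hr2]
          simp only [hπ, LinearMap.funLeft_apply]
          exact Finset.sum_subtype_eq_sum_filter (fun j => 1 - x j)
        have hsplit1 : ∑ i ∈ q.1, x i = ∑ i ∈ q.1 with i ∈ K, x i := by
          rw [← Finset.sum_filter_add_sum_filter_not q.1 (· ∈ K) x]
          have : ∑ i ∈ q.1 with ¬ i ∈ K, x i = 0 := by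
            apply Finset.sum_eq_zero
            intro i hi
            obtain ⟨hiq, hiK⟩ := Finset.mem_filter.1 hi
            rw [hxfix i hiK]
            simp [emb, hq1 i hiq hiK]
          rw [this, add_zero]
        have hsplit2 : ∑ j ∈ q.2, (1 - x j) = ∑ j ∈ q.2 with j ∈ K, (1 - x j) := by
          rw [← Finset.sum_filter_add_sum_filter_not q.2 (· ∈ K) (fun j => 1 - x j)]
          have : ∑ j ∈ q.2 with ¬ j ∈ K, (1 - x j) = 0 := by
            apply Finset.sum_eq_zero
            intro j hj
            obtain ⟨hjq, hjK⟩ := Finset.mem_filter.1 hj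
            rw [hxfix j hjK]
            simp [emb, hq2 j hjq hjK]
          rw [this, add_zero]
        have := hineq q hq
        rw [hsplit1, hsplit2] at this
        rw [h1, h2]
        exact this
    · -- described set ⊆ convexHull (emb '' T)
      rintro y ⟨hbox, hineq⟩
      set x : Fin n → ℝ := fun i => if h : i ∈ K then y ⟨i, h⟩ else emb a i with hxdef
      have hxfix : ∀ i ∉ K, x i = emb a i := by
        intro i hi; simp [hxdef, hi]
      have hxK : ∀ i : κ, x i = y i := by
        intro i; simp [hxdef, i.2]
      have hxbox : ∀ i, 0 ≤ x i ∧ x i ≤ 1 := by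
        intro i
        by_cases h : i ∈ K
        · rw [show x i = y ⟨i, h⟩ from hxK ⟨i, h⟩]
          exact hbox ⟨i, h⟩
        · rw [hxfix i h]
          exact emb_mem_Icc a i
      have hxhull : x ∈ convexHull ℝ (emb '' S) := by
        rw [hPdesc]
        refine ⟨hxbox, ?_⟩
        intro q hq
        by_cases h1 : ∃ i ∈ q.1, i ∉ K ∧ a i = true
        · obtain ⟨i, hiq, hiK, hai⟩ := h1
          have hx1 : x i = 1 := by rw [hxfix i hiK]; simp [emb, hai]
          have hle : (1:ℝ) ≤ ∑ i ∈ q.1, x i := by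
            rw [← hx1]
            exact Finset.single_le_sum (fun j _ => (hxbox j).1) hiq
          have hnn : (0:ℝ) ≤ ∑ j ∈ q.2, (1 - x j) :=
            Finset.sum_nonneg fun j _ => by linarith [(hxbox j).2]
          linarith
        · by_cases h2 : ∃ j ∈ q.2, j ∉ K ∧ a j = false
          · obtain ⟨j, hjq, hjK, haj⟩ := h2
            have hx0 : x j = 0 := by rw [hxfix j hjK]; simp [emb, haj]
            have hle : (1:ℝ) ≤ ∑ j ∈ q.2, (1 - x j) := by
              have : (1:ℝ) - x j ≤ ∑ j ∈ q.2, (1 - x j) :=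
                Finset.single_le_sum (f := fun j => 1 - x j)
                  (fun j _ => show (0:ℝ) ≤ 1 - x j by linarith [(hxbox j).2]) hjq
              rw [hx0] at this; linarith
            have hnn : (0:ℝ) ≤ ∑ i ∈ q.1, x i :=
              Finset.sum_nonneg fun i _ => (hxbox i).1
            linarith
          · push_neg at h1 h2
            have hc1 : ∀ i ∈ q.1, i ∉ K → a i = false := by
              intro i hi hiK
              rcases Bool.eq_false_or_eq_true (a i) with h | h
              · exact absurd h (h1 i hi hiK)
              · exact h
            have hc2 : ∀ j ∈ q.2, j ∉ K → a j = true := by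
              intro j hj hjK
              rcases Bool.eq_false_or_eq_true (a j) with h | h
              · exact h
              · exact absurd h (h2 j hj hjK)
            have hr : (q.1.subtype (· ∈ K), q.2.subtype (· ∈ K)) ∈ P' :=
              ⟨q, hq, hc1, hc2, rfl, rfl⟩
            have hy := hineq _ hr
            have h1' : ∑ i ∈ q.1.subtype (· ∈ K), y i = ∑ i ∈ q.1 with i ∈ K, x i := by
              rw [show (∑ i ∈ q.1.subtype (· ∈ K), y i)
                  = ∑ i ∈ q.1.subtype (· ∈ K), x ↑i from
                Finset.sum_congr rfl fun i _ => (hxK i).symm]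
              exact Finset.sum_subtype_eq_sum_filter (fun i => x i)
            have h2' : ∑ j ∈ q.2.subtype (· ∈ K), (1 - y j)
                = ∑ j ∈ q.2 with j ∈ K, (1 - x j) := by
              rw [show (∑ j ∈ q.2.subtype (· ∈ K), (1 - y j))
                  = ∑ j ∈ q.2.subtype (· ∈ K), (1 - x ↑j) from
                Finset.sum_congr rfl fun j _ => by rw [hxK j]]
              exact Finset.sum_subtype_eq_sum_filter (fun j => 1 - x j)
            have hsplit1 : ∑ i ∈ q.1, x i = ∑ i ∈ q.1 with i ∈ K, x i := by
              rw [← Finset.sum_filter_add_sum_filter_not q.1 (· ∈ K) x]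
              have : ∑ i ∈ q.1 with ¬ i ∈ K, x i = 0 := by
                apply Finset.sum_eq_zero
                intro i hi
                obtain ⟨hiq, hiK⟩ := Finset.mem_filter.1 hi
                rw [hxfix i hiK]
                simp [emb, hc1 i hiq hiK]
              rw [this, add_zero]
            have hsplit2 : ∑ j ∈ q.2, (1 - x j) = ∑ j ∈ q.2 with j ∈ K, (1 - x j) := by
              rw [← Finset.sum_filter_add_sum_filter_not q.2 (· ∈ K) (fun j => 1 - x j)]
              have : ∑ j ∈ q.2 with ¬ j ∈ K, (1 - x j) = 0 := by
                apply Finset.sum_eq_zero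
                intro j hj
                obtain ⟨hjq, hjK⟩ := Finset.mem_filter.1 hj
                rw [hxfix j hjK]
                simp [emb, hc2 j hjq hjK]
              rw [this, add_zero]
            rw [hsplit1, hsplit2, ← h1', ← h2']
            exact hy
      have hface : x ∈ convexHull ℝ (emb '' Sa) :=
        face_lemma S K a hxhull hxfix
      have hyπ : π x = y := by
        funext i
        simp only [hπ, LinearMap.funLeft_apply]
        exact hxK i
      rw [stepA, ← π.image_convexHull]
      exact ⟨x, hface, hyπ⟩
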